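/- (Growth of the gauge along outgoing disto-lines.) Let ℓ ≥ 1, let (c,d) ∈ S (i.e. |c|^{2ℓ} + d² = 1) with c ≠ 0, let ϱ ∈ ℝ with cϱ > 0, and let (t,s) ∈ ℝ² with ⟨(c,d)|(t,s)⟩_ℓ ≥ 0. Then, along the disto-line t(τ) = t + ϱτ, s(τ) = s + (d/f_ℓ(c))(f_ℓ(t(τ)) − f_ℓ(t)), one has for every τ ≥ 0: ρ(t(τ),s(τ))^{2ℓ} − ρ(t,s)^{2ℓ} ≥ (ϱτ/(2c))^{2ℓ}. -/

import Mathlib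

open MeasureTheory Real Set

noncomputable section

/-- `f_ℓ(σ) = σ|σ|^{ℓ-1}`. -/
def fl (l : ℝ) (σ : ℝ) : ℝ := σ * |σ| ^ (l - 1)

/-- The disto-scalar product `⟨v|w⟩_ℓ`. -/
def distoDot (l : ℝ) (v w : ℝ × ℝ) : ℝ := fl l v.1 * fl l w.1 + v.2 * w.2

/-- The distorted determinant `Δ_ℓ(v;w)`. -/
def distoDet (l : ℝ) (v w : ℝ × ℝ) : ℝ := fl l v.1 * w.2 - v.2 * fl l w.1

/-- The quasihomogeneous gauge `ρ(t,s)`. -/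
def qgauge (l : ℝ) (p : ℝ × ℝ) : ℝ := (|p.1| ^ (2 * l) + p.2 ^ 2) ^ (1 / (2 * l))

/-- First coordinate of the disto-line through `(t,s)` parallel to `(c,d)` with speed `ϱ`. -/
def lineT (ϱ t : ℝ) (τ : ℝ) : ℝ := t + ϱ * τ

/-- Second coordinate of the disto-line through `(t,s)` parallel to `(c,d)` with speed `ϱ`. -/
def lineS (l c d ϱ t s : ℝ) (τ : ℝ) : ℝ := s + d / fl l c * (fl l (t + ϱ * τ) - fl l t)

/-- superadditivity of `x ↦ x^p` for `p ≥ 1`. -/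
lemma superadd_aux (x y p : ℝ) (hx : 0 ≤ x) (hy : 0 ≤ y) (hp : 1 ≤ p) :
    x ^ p + y ^ p ≤ (x + y) ^ p := by
  have h := NNReal.add_rpow_le_rpow_add x.toNNReal y.toNNReal hp
  rw [← NNReal.coe_le_coe] at h
  push_cast [NNReal.coe_rpow, Real.coe_toNNReal x hx, Real.coe_toNNReal y hy] at h
  exact h

/-- `fl l x = x ^ l` for `0 ≤ x`. -/
lemma fl_of_nonneg (l : ℝ) (hl : 1 ≤ l) (x : ℝ) (hx : 0 ≤ x) : fl l x = x ^ l := by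
  rcases eq_or_lt_of_le hx with h | h
  · rw [fl, ← h, Real.zero_rpow (by linarith), abs_zero, zero_mul]
  · rw [fl, abs_of_pos h]
    nth_rewrite 1 [← Real.rpow_one x]
    rw [← Real.rpow_add h]; ring_nf

/-- `fl l (-x) = - fl l x`. -/
lemma fl_neg (l : ℝ) (x : ℝ) : fl l (-x) = - fl l x := by
  simp [fl]

lemma fl_sq (l : ℝ) (hl : 1 ≤ l) (σ : ℝ) : fl l σ ^ 2 = |σ| ^ (2 * l) := by
  rcases eq_or_ne σ 0 with h | h
  · simp [fl, h, Real.zero_rpow (show (2:ℝ) * l ≠ 0 by positivity)]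
  · have hσ : 0 < |σ| := abs_pos.2 h
    have h1 : fl l σ ^ 2 = |σ| ^ (2:ℝ) * |σ| ^ ((l - 1) * 2) := by
      rw [fl, mul_pow, ← sq_abs σ, ← Real.rpow_natCast |σ| 2,
        ← Real.rpow_natCast (|σ| ^ (l - 1)) 2, ← Real.rpow_mul hσ.le]
      norm_num
    rw [h1, ← Real.rpow_add hσ]
    ring_nf

/-- Key growth lemma: `|f(a) - f(b)| ≥ ((a-b)/2)^l` for `b ≤ a`. -/
lemma fl_key (l : ℝ) (hl : 1 ≤ l) (a b : ℝ) (hab : b ≤ a) :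
    ((a - b) / 2) ^ l ≤ fl l a - fl l b := by
  have hab2 : 0 ≤ a - b := by linarith
  rcases le_total 0 b with hb | hb
  · -- both nonnegative
    have ha : 0 ≤ a := le_trans hb hab
    rw [fl_of_nonneg l hl a ha, fl_of_nonneg l hl b hb]
    have h1 : (a - b) ^ l + b ^ l ≤ a ^ l := by
      have := superadd_aux (a - b) b l hab2 hb hl
      rwa [sub_add_cancel] at this
    have h2 : ((a - b) / 2) ^ l ≤ (a - b) ^ l :=
      Real.rpow_le_rpow (by linarith) (by linarith) (by linarith)
    linarith
  · rcases le_total a 0 with ha | ha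
    · -- both nonpositive
      have h1 : fl l a = - ((-a) ^ l) := by
        rw [← fl_of_nonneg l hl (-a) (by linarith), fl_neg]; ring
      have h2 : fl l b = - ((-b) ^ l) := by
        rw [← fl_of_nonneg l hl (-b) (by linarith), fl_neg]; ring
      rw [h1, h2]
      have h3 : (-b - -a) ^ l + (-a) ^ l ≤ (-b) ^ l := by
        have := superadd_aux (-b - -a) (-a) l (by linarith) (by linarith) hl
        rwa [sub_add_cancel] at this
      have h4 : ((a - b) / 2) ^ l ≤ (a - b) ^ l :=
        Real.rpow_le_rpow (by linarith) (by linarith) (by linarith)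
      have h5 : (-b - -a : ℝ) = a - b := by ring
      rw [h5] at h3
      linarith
    · -- b ≤ 0 ≤ a : fl a - fl b = a^l + (-b)^l
      have h1 : fl l a = a ^ l := fl_of_nonneg l hl a ha
      have h2 : fl l b = - ((-b) ^ l) := by
        rw [← fl_of_nonneg l hl (-b) (by linarith), fl_neg]; ring
      rw [h1, h2]
      have hmax : (a - b) / 2 ≤ a ∨ (a - b) / 2 ≤ -b := by
        by_contra h
        push_neg at h
        linarith [h.1, h.2]
      have hbl : 0 ≤ (-b) ^ l := Real.rpow_nonneg (by linarith) l
      have hal : 0 ≤ a ^ l := Real.rpow_nonneg ha l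
      rcases hmax with h | h
      · have := Real.rpow_le_rpow (z := l) (by linarith : (0:ℝ) ≤ (a - b)/2) h (by linarith)
        linarith
      · have := Real.rpow_le_rpow (z := l) (by linarith : (0:ℝ) ≤ (a - b)/2) h (by linarith)
        linarith

set_option maxHeartbeats 1600000 in
/-- growth of the gauge along outgoing disto-lines. -/
theorem gauge_growth_along_line (l : ℝ) (hl : 1 ≤ l) (c d : ℝ) (hc : c ≠ 0)
    (hS : |c| ^ (2 * l) + d ^ 2 = 1) (ϱ : ℝ) (hcϱ : 0 < c * ϱ)
    (t s : ℝ) (hdot : 0 ≤ distoDot l (c, d) (t, s)) :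
    ∀ τ : ℝ, 0 ≤ τ →
      (ϱ * τ / (2 * c)) ^ (2 * l) ≤
        qgauge l (lineT ϱ t τ, lineS l c d ϱ t s τ) ^ (2 * l) - qgauge l (t, s) ^ (2 * l) := by
  intro τ hτ
  have h2l : (0:ℝ) < 2 * l := by linarith
  -- gauge to the power 2l
  have gauge_pow : ∀ p : ℝ × ℝ, qgauge l p ^ (2 * l) = fl l p.1 ^ 2 + p.2 ^ 2 := by
    intro p
    rw [qgauge, ← Real.rpow_mul (by positivity), one_div,
      inv_mul_cancel₀ (ne_of_gt h2l), Real.rpow_one, fl_sq l hl]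
  set fc := fl l c with hfc_def
  set F0 := fl l t with hF0_def
  set F := fl l (t + ϱ * τ) with hF_def
  set D := F - F0 with hD_def
  set P0 := fc * F0 + d * s with hP0_def
  have hfc2 : fc ^ 2 = 1 - d ^ 2 := by rw [hfc_def, fl_sq l hl c]; linarith
  have hclpos : (0:ℝ) < |c| ^ (2 * l) := Real.rpow_pos_of_pos (abs_pos.2 hc) _
  have hfc2pos : 0 < fc ^ 2 := by rw [hfc_def, fl_sq l hl c]; exact hclpos
  have hfc_ne : fc ≠ 0 := by intro h; rw [h] at hfc2pos; simp at hfc2pos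
  have hP0 : 0 ≤ P0 := hdot
  -- sign considerations
  have hDfc : 0 ≤ D / fc ∧ (|ϱ * τ| / 2) ^ l ≤ |D| := by
    rcases lt_trichotomy c 0 with hcneg | hczero | hcpos
    · have hϱ : ϱ < 0 := by nlinarith
      have hle : t + ϱ * τ ≤ t := by nlinarith
      have hk := fl_key l hl t (t + ϱ * τ) hle
      have hDle : D ≤ 0 := by
        have h0 : (0:ℝ) ≤ ((t - (t + ϱ * τ)) / 2) ^ l := Real.rpow_nonneg (by linarith) l
        rw [hD_def, hF_def, hF0_def]; linarith
      have hfcneg : fc < 0 := by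
        rw [hfc_def, fl]
        have : (0:ℝ) < |c| ^ (l - 1) := Real.rpow_pos_of_pos (abs_pos.2 hc) _
        nlinarith
      constructor
      · rw [div_nonneg_iff]; right; exact ⟨hDle, hfcneg.le⟩
      · have habs : |ϱ * τ| = -(ϱ * τ) := abs_of_nonpos (by nlinarith)
        have h5 : (t - (t + ϱ * τ)) / 2 = |ϱ * τ| / 2 := by rw [habs]; ring
        rw [h5] at hk
        have : |D| = F0 - F := by
          rw [hD_def, abs_of_nonpos hDle]; ring
        rw [this]; linarith
    · exact absurd hczero hc
    · have hϱ : 0 < ϱ := by nlinarith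
      have hle : t ≤ t + ϱ * τ := by nlinarith
      have hk := fl_key l hl (t + ϱ * τ) t hle
      have hDge : 0 ≤ D := by
        have h0 : (0:ℝ) ≤ ((t + ϱ * τ - t) / 2) ^ l := Real.rpow_nonneg (by linarith) l
        rw [hD_def, hF_def, hF0_def]; linarith
      have hfcpos : 0 < fc := by
        rw [hfc_def, fl]
        have : (0:ℝ) < |c| ^ (l - 1) := Real.rpow_pos_of_pos (abs_pos.2 hc) _
        nlinarith
      constructor
      · exact div_nonneg hDge hfcpos.le
      · have habs : |ϱ * τ| = ϱ * τ := abs_of_nonneg (by positivity)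
        have h5 : (t + ϱ * τ - t) / 2 = |ϱ * τ| / 2 := by rw [habs]; ring
        rw [h5] at hk
        rw [abs_of_nonneg hDge]
        linarith
  obtain ⟨hDfc_nonneg, hkey⟩ := hDfc
  -- the algebraic identity for the gauge difference
  have hΔ : qgauge l (lineT ϱ t τ, lineS l c d ϱ t s τ) ^ (2 * l) - qgauge l (t, s) ^ (2 * l)
      = D ^ 2 / fc ^ 2 + 2 * P0 * (D / fc) := by
    rw [gauge_pow, gauge_pow]
    simp only [lineT, lineS]
    rw [← hF_def, ← hF0_def, ← hfc_def, hD_def, hP0_def]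
    field_simp
    linear_combination (F - F0) ^ 2 * hfc2
  rw [hΔ]
  -- the main bound
  have hbase : 0 ≤ ϱ * τ / (2 * c) := by
    have h1 : ϱ * τ / (2 * c) = (c * ϱ) * τ / (2 * c ^ 2) := by
      field_simp
    rw [h1]
    positivity
  have hmul : (ϱ * τ / (2 * c)) ^ (2 * l) * (fc ^ 2) = (|ϱ * τ| / 2) ^ (2 * l) := by
    rw [hfc_def, fl_sq l hl c, ← Real.mul_rpow hbase (abs_nonneg c)]
    congr 1
    rcases lt_trichotomy c 0 with hcneg | hczero | hcpos
    · have hϱ : ϱ < 0 := by nlinarith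
      rw [abs_of_neg hcneg, abs_of_nonpos (by nlinarith : ϱ * τ ≤ 0)]
      field_simp
    · exact absurd hczero hc
    · have hϱ : 0 < ϱ := by nlinarith
      rw [abs_of_pos hcpos, abs_of_nonneg (by nlinarith : (0:ℝ) ≤ ϱ * τ)]
      field_simp
  have hsq : (|ϱ * τ| / 2) ^ (2 * l) = ((|ϱ * τ| / 2) ^ l) ^ 2 := by
    rw [← Real.rpow_natCast ((|ϱ * τ| / 2) ^ l) 2, ← Real.rpow_mul (by positivity)]
    norm_num [mul_comm]
  have hD2 : (|ϱ * τ| / 2) ^ (2 * l) ≤ D ^ 2 := by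
    rw [hsq, ← sq_abs D]
    have h0 : 0 ≤ (|ϱ * τ| / 2) ^ l := Real.rpow_nonneg (by positivity) l
    nlinarith
  have hmain : (ϱ * τ / (2 * c)) ^ (2 * l) ≤ D ^ 2 / fc ^ 2 := by
    rw [le_div_iff₀ hfc2pos, hmul]
    exact hD2
  nlinarith [mul_nonneg hP0 hDfc_nonneg]

end
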